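/- In the case K = 1, the online iterates yₘ := Tₘ(yₘ₋₁) satisfy limsup_{m→∞} ‖yₘ − y*ₘ‖ ≤ (ρ + σΔ)/(1 − Δ). -/

import Mathlib

/-- asymptotic tracking bound for the online iterates in the case `K = 1`,
`yₘ = Tₘ(yₘ₋₁)`: `limsup_{m→∞} ‖yₘ − y*ₘ‖ ≤ (ρ + σΔ)/(1 − Δ)`. -/
theorem online_tracking_limsup_K_one {Y : Type*} [NormedAddCommGroup Y] [NormedSpace ℝ Y]
    (Δ ρ σ : ℝ) (hΔ0 : 0 ≤ Δ) (hΔ1 : Δ < 1) (hρ : 0 ≤ ρ) (hσ : 0 ≤ σ)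
    (That T : ℕ → Y → Y) (ys : ℕ → Y)
    (hcontr : ∀ m (y y' : Y), ‖That m y - That m y'‖ ≤ Δ * ‖y - y'‖)
    (hfix : ∀ m, That m (ys m) = ys m)
    (hT : ∀ m y, ‖T m y - That m y‖ ≤ ρ)
    (hdrift : ∀ m, ‖ys (m + 1) - ys m‖ ≤ σ)
    (y : ℕ → Y) (hy : ∀ m, y (m + 1) = T (m + 1) (y m)) :
    Filter.limsup (fun m => ‖y m - ys m‖) Filter.atTop ≤ (ρ + σ * Δ) / (1 - Δ) := by
  have h1Δ : (0:ℝ) < 1 - Δ := by linarith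
  set C : ℝ := (ρ + σ * Δ) / (1 - Δ) with hC
  have hCval : (1 - Δ) * C = ρ + σ * Δ := by
    rw [hC]
    field_simp [h1Δ.ne']
  -- one-step recurrence
  have hstep : ∀ m, ‖y (m+1) - ys (m+1)‖ ≤ Δ * ‖y m - ys m‖ + (ρ + σ * Δ) := by
    intro m
    have h1 : ‖y (m+1) - ys (m+1)‖ ≤
        ‖T (m+1) (y m) - That (m+1) (y m)‖ + ‖That (m+1) (y m) - ys (m+1)‖ := by
      rw [hy m]
      exact norm_sub_le_norm_sub_add_norm_sub _ _ _
    have h2 : ‖That (m+1) (y m) - ys (m+1)‖ ≤ Δ * ‖y m - ys (m+1)‖ := by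
      calc ‖That (m+1) (y m) - ys (m+1)‖
          = ‖That (m+1) (y m) - That (m+1) (ys (m+1))‖ := by rw [hfix (m+1)]
        _ ≤ Δ * ‖y m - ys (m+1)‖ := hcontr _ _ _
    have h3 : ‖y m - ys (m+1)‖ ≤ ‖y m - ys m‖ + σ := by
      calc ‖y m - ys (m+1)‖ ≤ ‖y m - ys m‖ + ‖ys m - ys (m+1)‖ :=
            norm_sub_le_norm_sub_add_norm_sub _ _ _
        _ ≤ ‖y m - ys m‖ + σ := by
            have := hdrift m
            rw [norm_sub_rev] at this
            linarith
    have h4 : Δ * ‖y m - ys (m+1)‖ ≤ Δ * (‖y m - ys m‖ + σ) :=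
      mul_le_mul_of_nonneg_left h3 hΔ0
    have h5 := hT (m+1) (y m)
    calc ‖y (m+1) - ys (m+1)‖
        ≤ ‖T (m+1) (y m) - That (m+1) (y m)‖ + ‖That (m+1) (y m) - ys (m+1)‖ := h1
      _ ≤ ρ + Δ * ‖y m - ys (m+1)‖ := by linarith
      _ ≤ ρ + Δ * (‖y m - ys m‖ + σ) := by linarith
      _ = Δ * ‖y m - ys m‖ + (ρ + σ * Δ) := by ring
  have hCnonneg : 0 ≤ C := by
    apply div_nonneg _ (le_of_lt h1Δ)
    positivity
  -- bound by geometric decay plus C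
  have hbound : ∀ m, ‖y m - ys m‖ ≤ Δ ^ m * ‖y 0 - ys 0‖ + C := by
    intro m
    induction m with
    | zero => simp [hCnonneg]
    | succ n ih =>
        have h6 : Δ * ‖y n - ys n‖ ≤ Δ * (Δ ^ n * ‖y 0 - ys 0‖ + C) :=
          mul_le_mul_of_nonneg_left ih hΔ0
        calc ‖y (n+1) - ys (n+1)‖
            ≤ Δ * ‖y n - ys n‖ + (ρ + σ * Δ) := hstep n
          _ ≤ Δ * (Δ ^ n * ‖y 0 - ys 0‖ + C) + (ρ + σ * Δ) := by linarith
          _ = Δ ^ (n+1) * ‖y 0 - ys 0‖ + (Δ * C + (1 - Δ) * C) := by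
              rw [hCval]; ring
          _ = Δ ^ (n+1) * ‖y 0 - ys 0‖ + C := by ring
  have htend : Filter.Tendsto (fun m => Δ ^ m * ‖y 0 - ys 0‖ + C) Filter.atTop (nhds C) := by
    have h0 : Filter.Tendsto (fun m : ℕ => Δ ^ m) Filter.atTop (nhds 0) :=
      tendsto_pow_atTop_nhds_zero_of_lt_one hΔ0 hΔ1
    have := (h0.mul_const (‖y 0 - ys 0‖)).add_const C
    simpa using this
  calc Filter.limsup (fun m => ‖y m - ys m‖) Filter.atTop
      ≤ Filter.limsup (fun m => Δ ^ m * ‖y 0 - ys 0‖ + C) Filter.atTop := by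
        exact Filter.limsup_le_limsup (Filter.Eventually.of_forall hbound)
          (Filter.IsBoundedUnder.isCoboundedUnder_le
            ⟨0, Filter.eventually_map.mpr (Filter.Eventually.of_forall fun m => norm_nonneg _)⟩)
          htend.isBoundedUnder_le
    _ = C := htend.limsup_eq
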